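/- (JS → cross entropy as π₁ → 0) For a fixed probability vector p on K classes with p_y > 0, lim_{π₁→0⁺} D_JS_π(e_y, p) / h(1−π₁) = −log p_y, where D_JS_π(e_y, p) = H(π₁e_y + (1−π₁)p) − π₁H(e_y) − (1−π₁)H(p) and h(x) = −x log x. -/

import Mathlib

open Real Finset Filter

/-- Shannon entropy of a finite probability vector (convention `0 * log 0 = 0`). -/
noncomputable def shannonH {K : ℕ} (p : Fin K → ℝ) : ℝ := ∑ k, -(p k * Real.log (p k))

/-- One-hot probability vector at class `c`. -/
noncomputable def onehot {K : ℕ} (c : Fin K) : Fin K → ℝ := fun k => if k = c then 1 else 0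

theorem js_tendsto_ce {K : ℕ} (p : Fin K → ℝ)
    (hp : ∀ k, 0 ≤ p k) (hp1 : ∑ k, p k = 1)
    (y : Fin K) (hpy : 0 < p y) :
    Tendsto (fun a : ℝ =>
        (shannonH (fun k => a * onehot y k + (1 - a) * p k)
          - a * shannonH (onehot y) - (1 - a) * shannonH p)
        / (-((1 - a) * Real.log (1 - a))))
      (nhdsWithin 0 (Set.Ioo (0:ℝ) 1)) (nhds (-Real.log (p y))) := by
  set c := p y with hcdef
  set N : ℝ → ℝ := fun a => -((c + a * (1 - c)) * Real.log (c + a * (1 - c)))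
      + (1 - a) * (c * Real.log c) with hNdef
  set g : ℝ → ℝ := fun a => -((1 - a) * Real.log (1 - a)) with hgdef
  -- one-hot has zero entropy
  have hone : shannonH (onehot y) = 0 := by
    unfold shannonH onehot
    refine Finset.sum_eq_zero fun k _ => ?_
    by_cases hk : k = y <;> simp [hk]
  -- Key algebraic identity for the numerator
  have hkey : ∀ a ∈ Set.Ioo (0:ℝ) 1,
      shannonH (fun k => a * onehot y k + (1 - a) * p k)
        - a * shannonH (onehot y) - (1 - a) * shannonH p = N a + (1 - c) * g a := by
    intro a ha
    have h1a : (0:ℝ) < 1 - a := by linarith [ha.2]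
    rw [hone, mul_zero, sub_zero]
    unfold shannonH
    have hterm : ∀ k ∈ Finset.univ, -((a * onehot y k + (1 - a) * p k) *
        Real.log (a * onehot y k + (1 - a) * p k))
        = ((1 - a) * (-(p k * Real.log (p k))) + p k * g a)
          + (if k = y then N a - c * g a else 0) := by
      intro k _
      by_cases hk : k = y
      · subst hk
        have harg : a * onehot k k + (1 - a) * p k = c + a * (1 - c) := by
          simp [onehot]; ring
        rw [harg, if_pos rfl]
        simp only [hNdef, hgdef]
        ring
      · have harg : a * onehot y k + (1 - a) * p k = (1 - a) * p k := by
          simp [onehot, hk]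
        rw [harg, if_neg hk, add_zero]
        by_cases hpk : p k = 0
        · simp [hpk]
        · rw [Real.log_mul h1a.ne' hpk]
          simp only [hgdef]
          ring
    rw [Finset.sum_congr rfl hterm, Finset.sum_add_distrib, Finset.sum_add_distrib,
      ← Finset.mul_sum, ← Finset.sum_mul, hp1, Finset.sum_ite_eq' Finset.univ y]
    simp only [Finset.mem_univ, if_pos]
    ring
  -- derivative facts
  have hNd : HasDerivAt N (-Real.log c - (1 - c)) 0 := by
    have h1 : HasDerivAt (fun a : ℝ => c + a * (1 - c)) (1 - c) 0 := by
      simpa using ((hasDerivAt_id (0:ℝ)).mul_const (1 - c)).const_add c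
    have h2 : HasDerivAt (fun x : ℝ => x * Real.log x)
        (Real.log (c + 0 * (1 - c)) + 1) (c + 0 * (1 - c)) :=
      Real.hasDerivAt_mul_log (by simpa using hpy.ne')
    have h3 := h2.comp 0 h1
    have h4 : HasDerivAt (fun a : ℝ => (1 - a) * (c * Real.log c)) (-(c * Real.log c)) 0 := by
      simpa using ((hasDerivAt_id (0:ℝ)).const_sub 1).mul_const (c * Real.log c)
    have h5 := (h3.neg).add h4
    refine h5.congr_deriv ?_
    simp [Function.comp]
    ring
  have hgd : HasDerivAt g 1 0 := by
    have h1 : HasDerivAt (fun a : ℝ => 1 - a) (-1) 0 := by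
      simpa using (hasDerivAt_id (0:ℝ)).const_sub 1
    have h2 : HasDerivAt (fun x : ℝ => x * Real.log x)
        (Real.log (1 - (0:ℝ)) + 1) (1 - (0:ℝ)) :=
      Real.hasDerivAt_mul_log (by norm_num)
    have h3 := (h2.comp 0 h1).neg
    refine h3.congr_deriv ?_
    simp
  have hN0 : N 0 = 0 := by simp [hNdef]
  have hg0 : g 0 = 0 := by simp [hgdef]
  -- ratio tends to N'(0)
  have hNg : Tendsto (fun a => N a / g a) (nhdsWithin (0:ℝ) {(0:ℝ)}ᶜ)
      (nhds (-Real.log c - (1 - c))) := by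
    have hsN := hasDerivAt_iff_tendsto_slope.mp hNd
    have hsg := hasDerivAt_iff_tendsto_slope.mp hgd
    have hdiv := hsN.div hsg one_ne_zero
    rw [div_one] at hdiv
    have heq2 : (fun x => slope N 0 x / slope g 0 x)
        =ᶠ[nhdsWithin (0:ℝ) {(0:ℝ)}ᶜ] fun a => N a / g a := by
      filter_upwards [self_mem_nhdsWithin] with a (ha : a ≠ 0)
      simp only [slope_def_field, hN0, hg0, sub_zero]
      rw [div_div_div_comm, div_self ha, div_one]
    exact hdiv.congr' heq2
  have hsub : Set.Ioo (0:ℝ) 1 ⊆ {(0:ℝ)}ᶜ := fun x hx => ne_of_gt hx.1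
  have hNg' : Tendsto (fun a => N a / g a) (nhdsWithin (0:ℝ) (Set.Ioo 0 1))
      (nhds (-Real.log c - (1 - c))) := hNg.mono_left (nhdsWithin_mono _ hsub)
  have hfinal : Tendsto (fun a => (1 - c) + N a / g a) (nhdsWithin (0:ℝ) (Set.Ioo 0 1))
      (nhds (-Real.log c)) := by
    have := (tendsto_const_nhds (x := (1 - c))
      (f := nhdsWithin (0:ℝ) (Set.Ioo 0 1))).add hNg'
    convert this using 2
    ring
  refine hfinal.congr' ?_
  filter_upwards [self_mem_nhdsWithin] with a ha
  have h1a : (0:ℝ) < 1 - a := by linarith [ha.2]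
  have hlog : Real.log (1 - a) < 0 := Real.log_neg h1a (by linarith [ha.1])
  have hgpos : 0 < g a := by
    simp only [hgdef]
    nlinarith
  rw [hkey a ha]
  show (1 - c) + N a / g a = (N a + (1 - c) * g a) / g a
  field_simp
  ring
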